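/- Let 𝓗 be a normed multilinear hyper-ideal: a class of continuous multilinear maps between Banach spaces with a norm such that if A ∈ 𝓗(E_1,...,E_n;F), B_i ∈ 𝓛(G_1^i,...,G_{m_i}^i;E_i) are continuous multilinear maps, and t ∈ 𝓛(F;H) is a bounded linear operator, then t∘A∘(B_1,...,B_n) ∈ 𝓗 with ‖t∘A∘(B_1,...,B_n)‖_𝓗 ≤ ‖t‖·‖A‖_𝓗·‖B_1‖⋯‖B_n‖. Define 𝓟^𝓗(^nE;F) = {P : ∃ A ∈ 𝓗(^nE;F) with Â = P} with ‖P‖_{𝓟^𝓗} = inf{‖A‖_𝓗 : Â = P}. Then for every t ∈ 𝓛(F;H), Q ∈ 𝓟^𝓗(^nE;F) and every continuous m-homogeneous polynomial R : G → E, the composition t∘Q∘R belongs to 𝓟^𝓗(^{mn}G;H) and ‖t∘Q∘R‖_{𝓟^𝓗} ≤ (m^m/m!)^n·‖t‖·‖Q‖_{𝓟^𝓗}·‖R‖^n. -/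

import Mathlib

open Metric Finset

section Aux
variable {𝕜 E F G H : Type*} [RCLike 𝕜]
  [NormedAddCommGroup E] [NormedSpace 𝕜 E]
  [NormedAddCommGroup F] [NormedSpace 𝕜 F]
  [NormedAddCommGroup G] [NormedSpace 𝕜 G]
  [NormedAddCommGroup H] [NormedSpace 𝕜 H]

/-- sign of a boolean, as a scalar -/
noncomputable def sgn (𝕜 : Type*) [RCLike 𝕜] (b : Bool) : 𝕜 := if b then 1 else -1

lemma norm_sgn (b : Bool) : ‖sgn 𝕜 b‖ = 1 := by
  cases b <;> simp [sgn]

lemma coef_eq (m : ℕ) (f : Fin m → Fin m) :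
    ∑ e : Fin m → Bool, (∏ i, sgn 𝕜 (e i)) * ∏ i, sgn 𝕜 (e (f i)) =
      if Function.Bijective f then (2 : 𝕜) ^ m else 0 := by
  classical
  have key : ∀ e : Fin m → Bool,
      (∏ i, sgn 𝕜 (e i)) * ∏ i, sgn 𝕜 (e (f i)) =
        ∏ j, sgn 𝕜 (e j) ^ (1 + (univ.filter fun i => f i = j).card) := by
    intro e
    have h1 : ∏ i, sgn 𝕜 (e (f i)) =
        ∏ j, sgn 𝕜 (e j) ^ (univ.filter fun i => f i = j).card := by
      rw [← Finset.prod_fiberwise' univ f (fun j => sgn 𝕜 (e j))]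
      exact Finset.prod_congr rfl fun j _ => by rw [Finset.prod_const]
    rw [h1, ← Finset.prod_mul_distrib]
    exact Finset.prod_congr rfl fun j _ => by rw [pow_add, pow_one]
  rw [Finset.sum_congr rfl fun e _ => key e]
  rw [← Fintype.prod_sum (fun j (b : Bool) => sgn 𝕜 b ^ (1 + (univ.filter fun i => f i = j).card))]
  have hbool : ∀ a : ℕ, ∑ b : Bool, sgn 𝕜 b ^ a = 1 + (-1 : 𝕜) ^ a := by
    intro a; simp only [Fintype.sum_bool, sgn]; norm_num [add_comm]
  by_cases hf : Function.Bijective f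
  · rw [if_pos hf]
    have hc : ∀ j, (univ.filter fun i => f i = j).card = 1 := by
      intro j
      have : (univ.filter fun i => f i = j) = {(Equiv.ofBijective f hf).symm j} := by
        ext i
        simp only [Finset.mem_filter, Finset.mem_univ, true_and, Finset.mem_singleton]
        constructor
        · intro h; apply (Equiv.ofBijective f hf).injective; simp [Equiv.ofBijective_apply, h]
        · intro h; subst h; exact (Equiv.ofBijective f hf).apply_symm_apply j
      rw [this, Finset.card_singleton]
    calc ∏ j, ∑ b : Bool, sgn 𝕜 b ^ (1 + (univ.filter fun i => f i = j).card)
        = ∏ _j : Fin m, (2 : 𝕜) := by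
          refine Finset.prod_congr rfl fun j _ => ?_
          rw [hc j, hbool]; norm_num
      _ = (2 : 𝕜) ^ m := by simp
  · rw [if_neg hf]
    have hsurj : ¬ Function.Surjective f := fun h => hf (Finite.surjective_iff_bijective.mp h)
    rw [Function.Surjective] at hsurj
    push_neg at hsurj
    obtain ⟨j, hj⟩ := hsurj
    refine Finset.prod_eq_zero (Finset.mem_univ j) ?_
    have : (univ.filter fun i => f i = j) = ∅ := by
      ext i; simp only [Finset.mem_filter, Finset.mem_univ, true_and, Finset.notMem_empty,
        iff_false]
      exact fun h => hj i h
    rw [this, Finset.card_empty, hbool]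
    norm_num


lemma polar (m : ℕ) (B : ContinuousMultilinearMap 𝕜 (fun _ : Fin m => G) E) (x : Fin m → G) :
    ∑ e : Fin m → Bool, (∏ i, sgn 𝕜 (e i)) • B (fun _ => ∑ j, sgn 𝕜 (e j) • x j)
      = ∑ σ : Equiv.Perm (Fin m), (2 : 𝕜) ^ m • B (fun i => x (σ i)) := by
  classical
  have h1 : ∀ e : Fin m → Bool, B (fun _ => ∑ j, sgn 𝕜 (e j) • x j)
      = ∑ f : Fin m → Fin m, (∏ i, sgn 𝕜 (e (f i))) • B (fun i => x (f i)) := by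
    intro e
    have := B.toMultilinearMap.map_sum (g := fun (_ : Fin m) (j : Fin m) => sgn 𝕜 (e j) • x j)
    simp only [ContinuousMultilinearMap.coe_coe] at this
    rw [this]
    exact Finset.sum_congr rfl fun f _ => B.map_smul_univ (fun i => sgn 𝕜 (e (f i))) (fun i => x (f i))
  calc ∑ e : Fin m → Bool, (∏ i, sgn 𝕜 (e i)) • B (fun _ => ∑ j, sgn 𝕜 (e j) • x j)
      = ∑ e : Fin m → Bool, ∑ f : Fin m → Fin m,
          ((∏ i, sgn 𝕜 (e i)) * ∏ i, sgn 𝕜 (e (f i))) • B (fun i => x (f i)) := by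
        refine Finset.sum_congr rfl fun e _ => ?_
        rw [h1 e, Finset.smul_sum]
        exact Finset.sum_congr rfl fun f _ => smul_smul _ _ _
    _ = ∑ f : Fin m → Fin m,
          (∑ e : Fin m → Bool, (∏ i, sgn 𝕜 (e i)) * ∏ i, sgn 𝕜 (e (f i))) • B (fun i => x (f i)) := by
        rw [Finset.sum_comm]
        exact Finset.sum_congr rfl fun f _ => (Finset.sum_smul).symm
    _ = ∑ f : Fin m → Fin m,
          (if Function.Bijective f then (2 : 𝕜) ^ m else 0) • B (fun i => x (f i)) := by
        exact Finset.sum_congr rfl fun f _ => by rw [coef_eq]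
    _ = ∑ f ∈ univ.filter (fun f : Fin m → Fin m => Function.Bijective f),
          (2 : 𝕜) ^ m • B (fun i => x (f i)) := by
        rw [Finset.sum_filter]
        exact Finset.sum_congr rfl fun f _ => by split <;> simp
    _ = ∑ σ : Equiv.Perm (Fin m), (2 : 𝕜) ^ m • B (fun i => x (σ i)) := by
        refine Finset.sum_bij' (fun f hf => Equiv.ofBijective f (Finset.mem_filter.mp hf).2)
          (fun σ _ => ⇑σ) ?_ ?_ ?_ ?_ ?_
        · intro f hf; exact Finset.mem_univ _
        · intro σ _; exact Finset.mem_filter.mpr ⟨Finset.mem_univ _, σ.bijective⟩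
        · intro f hf; rfl
        · intro σ _; exact Equiv.ext fun i => rfl
        · intro f hf; rfl


lemma opNorm_le_of_unit {ι : Type*} [Fintype ι]
    (T : ContinuousMultilinearMap 𝕜 (fun _ : ι => G) E) {C : ℝ}
    (h : ∀ v : ι → G, (∀ i, ‖v i‖ ≤ 1) → ‖T v‖ ≤ C) : ‖T‖ ≤ C := by
  have hC : 0 ≤ C := (norm_nonneg _).trans (h 0 (fun i => by simp))
  refine ContinuousMultilinearMap.opNorm_le_bound hC fun v => ?_
  by_cases hv : ∀ i, v i ≠ 0
  · set c : ι → 𝕜 := fun i => (‖v i‖ : 𝕜) with hc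
    have hc0 : ∀ i, c i ≠ 0 := fun i => by
      simp [hc, RCLike.ofReal_eq_zero, norm_eq_zero, hv i]
    set u : ι → G := fun i => (c i)⁻¹ • v i with hu
    have hnu : ∀ i, ‖u i‖ ≤ 1 := by
      intro i
      rw [hu]
      simp only [norm_smul, norm_inv, hc, RCLike.norm_ofReal, abs_norm]
      rw [inv_mul_cancel₀ (norm_ne_zero_iff.mpr (hv i))]
    have hveq : v = fun i => c i • u i := by
      funext i; rw [hu]; simp [smul_inv_smul₀ (hc0 i)]
    calc ‖T v‖ = ‖(∏ i, c i) • T u‖ := by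
          conv_lhs => rw [hveq]
          rw [T.map_smul_univ]
      _ = (∏ i, ‖v i‖) * ‖T u‖ := by
          rw [norm_smul, norm_prod]
          congr 1
          exact Finset.prod_congr rfl fun i _ => by simp [hc, RCLike.norm_ofReal]
      _ ≤ (∏ i, ‖v i‖) * C := by
          refine mul_le_mul_of_nonneg_left (h u hnu) (Finset.prod_nonneg fun i _ => norm_nonneg _)
      _ = C * ∏ i, ‖v i‖ := mul_comm _ _
  · push_neg at hv
    obtain ⟨i, hi⟩ := hv
    have hTv : T v = 0 := T.toMultilinearMap.map_coord_zero i (by simpa using hi)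
    rw [hTv]
    have : ∏ j, ‖v j‖ = 0 := Finset.prod_eq_zero (Finset.mem_univ i) (by simp [hi])
    simp [this]

lemma exists_sym (m : ℕ) (hm : 0 < m) (R : G → E)
    (BR : ContinuousMultilinearMap 𝕜 (fun _ : Fin m => G) E)
    (hBR : ∀ x : G, BR (fun _ => x) = R x) :
    ∃ B : ContinuousMultilinearMap 𝕜 (fun _ : Fin m => G) E,
      (∀ x : G, B (fun _ => x) = R x) ∧
      ‖B‖ ≤ ((m : ℝ) ^ m / (m.factorial : ℝ)) *
        sSup {r : ℝ | ∃ x ∈ closedBall (0 : G) 1, r = ‖R x‖} := by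
  classical
  set M := sSup {r : ℝ | ∃ x ∈ closedBall (0 : G) 1, r = ‖R x‖} with hM
  have hbdd : BddAbove {r : ℝ | ∃ x ∈ closedBall (0 : G) 1, r = ‖R x‖} := by
    refine ⟨‖BR‖, fun r hr => ?_⟩
    obtain ⟨x, hx, rfl⟩ := hr
    rw [mem_closedBall, dist_zero_right] at hx
    calc ‖R x‖ = ‖BR fun _ => x‖ := by rw [hBR]
      _ ≤ ‖BR‖ * ∏ _i : Fin m, ‖x‖ := BR.le_opNorm _
      _ ≤ ‖BR‖ * 1 := by
          refine mul_le_mul_of_nonneg_left ?_ (norm_nonneg _)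
          rw [Finset.prod_const]
          exact pow_le_one₀ (norm_nonneg _) hx |>.trans (by simp)
      _ = ‖BR‖ := mul_one _
  have hRle : ∀ z : G, ‖z‖ ≤ 1 → ‖R z‖ ≤ M :=
    fun z hz => le_csSup hbdd ⟨z, by simpa [mem_closedBall, dist_zero_right] using hz, rfl⟩
  have hM0 : 0 ≤ M := (norm_nonneg (R 0)).trans (hRle 0 (by simp))
  -- homogeneity of R
  have hhom : ∀ (c : 𝕜) (y : G), R (c • y) = c ^ m • R y := by
    intro c y
    rw [← hBR, ← hBR]
    have := BR.map_smul_univ (fun _ : Fin m => c) (fun _ => y)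
    simpa using this
  -- bound for R on the ball of radius m
  have hRm : ∀ y : G, ‖y‖ ≤ (m : ℝ) → ‖R y‖ ≤ (m : ℝ) ^ m * M := by
    intro y hy
    have hm𝕜 : ((m : 𝕜)) ≠ 0 := Nat.cast_ne_zero.mpr hm.ne'
    have hz : ‖((m : 𝕜))⁻¹ • y‖ ≤ 1 := by
      rw [norm_smul, norm_inv, RCLike.norm_natCast]
      rw [inv_mul_le_iff₀ (by exact_mod_cast hm), mul_one]
      exact hy
    have : R y = ((m : 𝕜)) ^ m • R (((m : 𝕜))⁻¹ • y) := by
      rw [hhom, smul_smul, ← mul_pow, mul_inv_cancel₀ hm𝕜, one_pow, one_smul]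
    rw [this, norm_smul, norm_pow, RCLike.norm_natCast]
    exact mul_le_mul_of_nonneg_left (hRle _ hz) (by positivity)
  -- the symmetrization
  set B : ContinuousMultilinearMap 𝕜 (fun _ : Fin m => G) E :=
    ((m.factorial : 𝕜))⁻¹ • ∑ σ : Equiv.Perm (Fin m), BR.domDomCongr σ with hB
  have hfact𝕜 : ((m.factorial : 𝕜)) ≠ 0 := Nat.cast_ne_zero.mpr m.factorial_ne_zero
  have hBapp : ∀ v : Fin m → G,
      B v = ((m.factorial : 𝕜))⁻¹ • ∑ σ : Equiv.Perm (Fin m), BR (fun i => v (σ i)) := by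
    intro v
    rw [hB]
    simp [ContinuousMultilinearMap.sum_apply]
  refine ⟨B, ?_, ?_⟩
  · intro x
    rw [hBapp]
    simp only [hBR]
    rw [Finset.sum_const, Finset.card_univ, Fintype.card_perm, Fintype.card_fin]
    rw [← Nat.cast_smul_eq_nsmul 𝕜, smul_smul, inv_mul_cancel₀ hfact𝕜, one_smul]
  · refine opNorm_le_of_unit B fun v hv => ?_
    have hpolar := polar m BR v
    have h2 : ((2 : 𝕜)) ^ m ≠ 0 := pow_ne_zero _ two_ne_zero
    have hsum : ∑ σ : Equiv.Perm (Fin m), BR (fun i => v (σ i))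
        = (((2 : 𝕜)) ^ m)⁻¹ • ∑ e : Fin m → Bool,
            (∏ i, sgn 𝕜 (e i)) • BR (fun _ => ∑ j, sgn 𝕜 (e j) • v j) := by
      rw [hpolar, Finset.smul_sum]
      refine (Finset.sum_congr rfl fun σ _ => ?_)
      rw [smul_smul, inv_mul_cancel₀ h2, one_smul]
    rw [hBapp, hsum, smul_smul, norm_smul]
    have hnormc : ‖((m.factorial : 𝕜))⁻¹ * (((2 : 𝕜)) ^ m)⁻¹‖
        = ((m.factorial : ℝ))⁻¹ * ((2 : ℝ) ^ m)⁻¹ := by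
      rw [norm_mul, norm_inv, norm_inv, norm_pow, RCLike.norm_natCast]
      norm_num
    rw [hnormc]
    have hterm : ∀ e : Fin m → Bool,
        ‖(∏ i, sgn 𝕜 (e i)) • BR (fun _ => ∑ j, sgn 𝕜 (e j) • v j)‖ ≤ (m : ℝ) ^ m * M := by
      intro e
      rw [norm_smul, norm_prod]
      have h1 : ∏ i, ‖sgn 𝕜 (e i)‖ = 1 := by
        simp [norm_sgn]
      rw [h1, one_mul, hBR]
      refine hRm _ ?_
      calc ‖∑ j, sgn 𝕜 (e j) • v j‖ ≤ ∑ j, ‖sgn 𝕜 (e j) • v j‖ := norm_sum_le _ _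
        _ ≤ ∑ _j : Fin m, 1 := by
            refine Finset.sum_le_sum fun j _ => ?_
            rw [norm_smul, norm_sgn, one_mul]
            exact hv j
        _ = (m : ℝ) := by simp
    calc ((m.factorial : ℝ))⁻¹ * ((2 : ℝ) ^ m)⁻¹ *
          ‖∑ e : Fin m → Bool, (∏ i, sgn 𝕜 (e i)) • BR (fun _ => ∑ j, sgn 𝕜 (e j) • v j)‖
        ≤ ((m.factorial : ℝ))⁻¹ * ((2 : ℝ) ^ m)⁻¹ *
          ∑ _e : Fin m → Bool, (m : ℝ) ^ m * M := by
          refine mul_le_mul_of_nonneg_left ?_ (by positivity)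
          exact (norm_sum_le _ _).trans (Finset.sum_le_sum fun e _ => hterm e)
      _ = ((m : ℝ) ^ m / (m.factorial : ℝ)) * M := by
          rw [Finset.sum_const, Finset.card_univ]
          simp only [Fintype.card_fun, Fintype.card_bool, Fintype.card_fin, nsmul_eq_mul]
          push_cast
          field_simp


/-- Composition `v ↦ t (A (fun i => B (fun j => v (j,i))))` as a continuous multilinear map. -/
noncomputable def compMap (n m : ℕ) (t : F →L[𝕜] H)
    (A : ContinuousMultilinearMap 𝕜 (fun _ : Fin n => E) F)
    (B : ContinuousMultilinearMap 𝕜 (fun _ : Fin m => G) E) :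
    ContinuousMultilinearMap 𝕜 (fun _ : Fin m × Fin n => G) H := by
  classical
  refine MultilinearMap.mkContinuous
    { toFun := fun v => t (A fun i => B fun j => v (j, i))
      map_update_add' := ?_
      map_update_smul' := ?_ } (‖t‖ * ‖A‖ * ‖B‖ ^ n) ?_
  case refine_1 =>
    intro _ v p x y
    obtain ⟨j0, i0⟩ := p
    have key : ∀ z : G, (fun i => B fun j => Function.update v (j0, i0) z (j, i)) =
        Function.update (fun i => B fun j => v (j, i)) i0
          (B (Function.update (fun j => v (j, i0)) j0 z)) := by
      intro z
      funext i
      by_cases hi : i = i0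
      · subst hi
        rw [Function.update_self]
        congr 1
        funext j
        by_cases hj : j = j0
        · subst hj; rw [Function.update_self, Function.update_self]
        · rw [Function.update_of_ne hj,
            Function.update_of_ne (by simp [Prod.ext_iff, hj])]
      · rw [Function.update_of_ne hi]
        congr 1
        funext j
        rw [Function.update_of_ne (by simp [Prod.ext_iff, hi])]
    simp only [key]
    rw [B.map_update_add, A.map_update_add, map_add]
  case refine_2 =>
    intro _ v p c x
    obtain ⟨j0, i0⟩ := p
    have key : ∀ z : G, (fun i => B fun j => Function.update v (j0, i0) z (j, i)) =
        Function.update (fun i => B fun j => v (j, i)) i0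
          (B (Function.update (fun j => v (j, i0)) j0 z)) := by
      intro z
      funext i
      by_cases hi : i = i0
      · subst hi
        rw [Function.update_self]
        congr 1
        funext j
        by_cases hj : j = j0
        · subst hj; rw [Function.update_self, Function.update_self]
        · rw [Function.update_of_ne hj,
            Function.update_of_ne (by simp [Prod.ext_iff, hj])]
      · rw [Function.update_of_ne hi]
        congr 1
        funext j
        rw [Function.update_of_ne (by simp [Prod.ext_iff, hi])]
    simp only [key]
    rw [B.map_update_smul, A.map_update_smul, map_smul]
  case refine_3 =>
    intro v
    calc ‖t (A fun i => B fun j => v (j, i))‖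
        ≤ ‖t‖ * ‖A fun i => B fun j => v (j, i)‖ := t.le_opNorm _
      _ ≤ ‖t‖ * (‖A‖ * ∏ i, ‖B fun j => v (j, i)‖) := by
          exact mul_le_mul_of_nonneg_left (A.le_opNorm _) (norm_nonneg _)
      _ ≤ ‖t‖ * (‖A‖ * ∏ i, (‖B‖ * ∏ j, ‖v (j, i)‖)) := by
          refine mul_le_mul_of_nonneg_left (mul_le_mul_of_nonneg_left ?_ (norm_nonneg _))
            (norm_nonneg _)
          exact Finset.prod_le_prod (fun i _ => norm_nonneg _) (fun i _ => B.le_opNorm _)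
      _ = ‖t‖ * ‖A‖ * ‖B‖ ^ n * ∏ p : Fin m × Fin n, ‖v p‖ := by
          rw [Finset.prod_mul_distrib, Finset.prod_const, Finset.card_univ, Fintype.card_fin]
          rw [Fintype.prod_prod_type]
          rw [Finset.prod_comm]
          ring

lemma compMap_apply (n m : ℕ) (t : F →L[𝕜] H)
    (A : ContinuousMultilinearMap 𝕜 (fun _ : Fin n => E) F)
    (B : ContinuousMultilinearMap 𝕜 (fun _ : Fin m => G) E) (v : Fin m × Fin n → G) :
    compMap n m t A B v = t (A fun i => B fun j => v (j, i)) := rfl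

end Aux


/-- Let `𝓗` be a normed multilinear hyper-ideal, with components
`S1 = 𝓗(^nE;F)` (norm `N1`) and `S2 = 𝓗(^{mn}G;H)` (norm `N2`), so that the hyper-ideal
property holds: compositions `t ∘ A ∘ (B₁,…,B_n)` of `A ∈ S1` with continuous `m`-linear
maps `Bᵢ : G^m → E` and a bounded linear `t : F → H` land in `S2` with
`N2 ≤ ‖t‖ N1(A) ∏ ‖Bᵢ‖`. Define `𝓟^𝓗` via representatives. Then for every
`t ∈ 𝓛(F;H)`, `Q ∈ 𝓟^𝓗(^nE;F)` and every continuous `m`-homogeneous polynomial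
`R : G → E`, the composition `t ∘ Q ∘ R ∈ 𝓟^𝓗(^{mn}G;H)` and
`‖t∘Q∘R‖_{𝓟^𝓗} ≤ (m^m/m!)^n ‖t‖ ‖Q‖_{𝓟^𝓗} ‖R‖^n`. -/
theorem stmt2 {𝕜 E F G H : Type*} [RCLike 𝕜]
    [NormedAddCommGroup E] [NormedSpace 𝕜 E] [CompleteSpace E]
    [NormedAddCommGroup F] [NormedSpace 𝕜 F] [CompleteSpace F]
    [NormedAddCommGroup G] [NormedSpace 𝕜 G] [CompleteSpace G]
    [NormedAddCommGroup H] [NormedSpace 𝕜 H] [CompleteSpace H]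
    (n m : ℕ) (hn : 0 < n) (hm : 0 < m)
    (S1 : Set (ContinuousMultilinearMap 𝕜 (fun _ : Fin n => E) F))
    (N1 : ContinuousMultilinearMap 𝕜 (fun _ : Fin n => E) F → ℝ)
    (S2 : Set (ContinuousMultilinearMap 𝕜 (fun _ : Fin (m * n) => G) H))
    (N2 : ContinuousMultilinearMap 𝕜 (fun _ : Fin (m * n) => G) H → ℝ)
    (hN1 : ∀ A, 0 ≤ N1 A) (hN2 : ∀ C, 0 ≤ N2 C)
    -- the hyper-ideal property of `𝓗` (stated pointwise for the composed map):
    (hhyper : ∀ (t : F →L[𝕜] H) (A : ContinuousMultilinearMap 𝕜 (fun _ : Fin n => E) F),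
      A ∈ S1 → ∀ (Bv : Fin n → ContinuousMultilinearMap 𝕜 (fun _ : Fin m => G) E)
        (C : ContinuousMultilinearMap 𝕜 (fun _ : Fin (m * n) => G) H),
      (∀ v : Fin (m * n) → G,
          C v = t (A fun i => Bv i fun j => v (finProdFinEquiv (j, i)))) →
      C ∈ S2 ∧ N2 C ≤ ‖t‖ * N1 A * ∏ i : Fin n, ‖Bv i‖)
    -- the data: `t`, the polynomial `Q ∈ 𝓟^𝓗(^nE;F)`, and the polynomial `R`:
    (t : F →L[𝕜] H) (Q : E → F)
    (hQ : ∃ A ∈ S1, ∀ x : E, A (fun _ => x) = Q x)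
    (R : G → E)
    (hR : ∃ BR : ContinuousMultilinearMap 𝕜 (fun _ : Fin m => G) E,
      ∀ x : G, BR (fun _ => x) = R x) :
    (∃ C ∈ S2, ∀ x : G, C (fun _ => x) = t (Q (R x))) ∧
      sInf {r : ℝ | ∃ C ∈ S2, (∀ x : G, C (fun _ => x) = t (Q (R x))) ∧ r = N2 C}
        ≤ ((m : ℝ) ^ m / (m.factorial : ℝ)) ^ n * ‖t‖ *
          sInf {r : ℝ | ∃ A ∈ S1, (∀ x : E, A (fun _ => x) = Q x) ∧ r = N1 A} *
          (sSup {r : ℝ | ∃ x ∈ closedBall (0 : G) 1, r = ‖R x‖}) ^ n := by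
  classical
  obtain ⟨BR, hBR⟩ := hR
  obtain ⟨B, hBdiag, hBnorm⟩ := exists_sym m hm R BR hBR
  set M := sSup {r : ℝ | ∃ x ∈ closedBall (0 : G) 1, r = ‖R x‖} with hMdef
  have hM0 : 0 ≤ M := by
    have h1 : (0:ℝ) < (m:ℝ)^m / (m.factorial : ℝ) := by positivity
    nlinarith [norm_nonneg B]
  have build : ∀ A ∈ S1, (∀ x : E, A (fun _ => x) = Q x) →
      ∃ C ∈ S2, (∀ x : G, C (fun _ => x) = t (Q (R x))) ∧
        N2 C ≤ ‖t‖ * N1 A * ((m:ℝ)^m / (m.factorial : ℝ) * M)^n := by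
    intro A hA hAd
    set C := (compMap n m t A B).domDomCongr finProdFinEquiv with hC
    have hCapp : ∀ v : Fin (m*n) → G,
        C v = t (A fun i => B fun j => v (finProdFinEquiv (j, i))) := by
      intro v; rw [hC]; rfl
    obtain ⟨hCS, hCN⟩ := hhyper t A hA (fun _ => B) C hCapp
    refine ⟨C, hCS, ?_, ?_⟩
    · intro x
      rw [hCapp]
      have h1 : (fun i : Fin n => B fun _j : Fin m => x) = fun _i : Fin n => R x :=
        funext fun _ => hBdiag x
      rw [h1, hAd (R x)]
    · refine hCN.trans ?_
      have h2 : ∏ _i : Fin n, ‖B‖ = ‖B‖ ^ n := by simp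
      rw [h2]
      exact mul_le_mul_of_nonneg_left (pow_le_pow_left₀ (norm_nonneg _) hBnorm n)
        (mul_nonneg (norm_nonneg t) (hN1 A))
  obtain ⟨A0, hA0, hA0d⟩ := hQ
  obtain ⟨C0, hC0S, hC0d, hC0N⟩ := build A0 hA0 hA0d
  set setA := {r : ℝ | ∃ A ∈ S1, (∀ x : E, A (fun _ => x) = Q x) ∧ r = N1 A} with hsetA
  set setC := {r : ℝ | ∃ C ∈ S2, (∀ x : G, C (fun _ => x) = t (Q (R x))) ∧ r = N2 C} with hsetC
  refine ⟨⟨C0, hC0S, hC0d⟩, ?_⟩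
  have hCbdd : BddBelow setC := ⟨0, fun r hr => by obtain ⟨C, _, _, rfl⟩ := hr; exact hN2 C⟩
  have hAne : setA.Nonempty := ⟨N1 A0, A0, hA0, hA0d, rfl⟩
  set c : ℝ := ((m:ℝ)^m / (m.factorial : ℝ))^n * ‖t‖ * M^n with hc
  have hc0 : 0 ≤ c := by positivity
  have hkey : ∀ r ∈ setA, sInf setC ≤ c * r := by
    intro r hr
    obtain ⟨A, hA, hAd, rfl⟩ := hr
    obtain ⟨C, hCS, hCd, hCN⟩ := build A hA hAd
    refine (csInf_le hCbdd ⟨C, hCS, hCd, rfl⟩).trans (hCN.trans (le_of_eq ?_))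
    rw [hc, mul_pow]; ring
  have main : sInf setC ≤ c * sInf setA := by
    rcases eq_or_lt_of_le hc0 with hczero | hcpos
    · obtain ⟨r, hr⟩ := hAne
      have h3 := hkey r hr
      rw [← hczero] at h3 ⊢
      simpa using h3
    · have h2 : sInf setC / c ≤ sInf setA :=
        le_csInf hAne fun r hr => (div_le_iff₀ hcpos).mpr (by rw [mul_comm]; exact hkey r hr)
      calc sInf setC = sInf setC / c * c := by field_simp
        _ ≤ sInf setA * c := mul_le_mul_of_nonneg_right h2 hcpos.le
        _ = c * sInf setA := mul_comm _ _
  refine main.trans (le_of_eq ?_)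
  rw [hc]; ring
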